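/- For the 3×3 matrices C_t = diag-block([[t,-1],[1,-t]], [t]) with t > 0, F(C_t) = 4t⁴/(3t⁴ + 2t²), which tends to 0 as t → 0⁺. -/

import Mathlib

open Matrix

/-- Symmetric part `S(A) = (A + Aᵀ)/2`. -/
noncomputable def Ssym {m : ℕ} (A : Matrix (Fin m) (Fin m) ℝ) : Matrix (Fin m) (Fin m) ℝ :=
  (1 / 2 : ℝ) • (A + Aᵀ)

/-- Commutator of matrices. -/
def brk {m : ℕ} (X Y : Matrix (Fin m) (Fin m) ℝ) : Matrix (Fin m) (Fin m) ℝ :=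
  X * Y - Y * X

/-- Squared norm `|X|² = tr (X Xᵀ)`. -/
noncomputable def nsq {m : ℕ} (X : Matrix (Fin m) (Fin m) ℝ) : ℝ :=
  (X * Xᵀ).trace

/-- The Ricci pinching functional of the almost-abelian solvmanifold attached to `A`:
`F(A) = (tr S(A)² + (tr A)²)² / (tr S(A)² (tr S(A)² + (tr A)²) + ¼|[A,Aᵀ]|²)`. -/
noncomputable def Fpinch {m : ℕ} (A : Matrix (Fin m) (Fin m) ℝ) : ℝ :=
  ((Ssym A * Ssym A).trace + A.trace ^ 2) ^ 2 /
    ((Ssym A * Ssym A).trace * ((Ssym A * Ssym A).trace + A.trace ^ 2)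
      + (1 / 4) * nsq (brk A Aᵀ))

lemma key (t : ℝ) : Fpinch !![t, -1, 0; 1, -t, 0; 0, 0, t] = 4 * t ^ 2 / (3 * t ^ 2 + 2) := by
  have hT : (!![t, -1, 0; 1, -t, 0; 0, 0, t])ᵀ = !![t, 1, 0; -1, -t, 0; 0, 0, t] := by
    ext i j; fin_cases i <;> fin_cases j <;> simp [Matrix.vecHead, Matrix.vecTail]
  have hS : Ssym !![t, -1, 0; 1, -t, 0; 0, 0, t] = !![t, 0, 0; 0, -t, 0; 0, 0, t] := by
    rw [Ssym, hT]
    ext i j; fin_cases i <;> fin_cases j <;> norm_num <;> ring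
  have h1 : (Ssym !![t, -1, 0; 1, -t, 0; 0, 0, t] * Ssym !![t, -1, 0; 1, -t, 0; 0, 0, t]).trace
      = 3 * t ^ 2 := by
    rw [hS]
    simp [Matrix.trace_fin_three, Matrix.mul_apply, Fin.sum_univ_three, Matrix.vecHead, Matrix.vecTail]
    ring
  have h2 : (!![t, -1, 0; 1, -t, 0; 0, 0, t]).trace = t := by
    simp [Matrix.trace_fin_three]
  have h3 : nsq (brk !![t, -1, 0; 1, -t, 0; 0, 0, t] (!![t, -1, 0; 1, -t, 0; 0, 0, t])ᵀ)
      = 32 * t ^ 2 := by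
    rw [brk, hT]
    have hB : !![t, -1, 0; 1, -t, 0; 0, 0, t] * !![t, 1, 0; -1, -t, 0; 0, 0, t]
        - !![t, 1, 0; -1, -t, 0; 0, 0, t] * !![t, -1, 0; 1, -t, 0; 0, 0, t]
        = !![0, 4*t, 0; 4*t, 0, 0; 0, 0, 0] := by
      ext i j
      fin_cases i <;> fin_cases j <;>
        simp [Matrix.mul_apply, Fin.sum_univ_three, Matrix.vecHead, Matrix.vecTail] <;> ring
    rw [hB, nsq]
    have hT2 : (!![(0:ℝ), 4*t, 0; 4*t, 0, 0; 0, 0, 0])ᵀ = !![0, 4*t, 0; 4*t, 0, 0; 0, 0, 0] := by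
      ext i j; fin_cases i <;> fin_cases j <;> simp [Matrix.vecHead, Matrix.vecTail]
    rw [hT2]
    simp [Matrix.trace_fin_three, Matrix.mul_apply, Fin.sum_univ_three, Matrix.vecHead, Matrix.vecTail]
    ring
  rw [Fpinch, h1, h2, h3]
  rcases eq_or_ne t 0 with h | h
  · simp [h]
  · have ht2 : (0:ℝ) < t ^ 2 := by positivity
    rw [div_eq_div_iff (by nlinarith) (by nlinarith)]
    ring

/-- For the 3×3 matrices `C_t = diag-block([[t,-1],[1,-t]], [t])` with `t > 0`,
`F(C_t) = 4t⁴/(3t⁴ + 2t²)`, which tends to `0` as `t → 0⁺`. -/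
theorem stmt_8 :
    (∀ t : ℝ, 0 < t →
      Fpinch !![t, -1, 0; 1, -t, 0; 0, 0, t] = 4 * t ^ 4 / (3 * t ^ 4 + 2 * t ^ 2)) ∧
    Filter.Tendsto (fun t : ℝ => Fpinch !![t, -1, 0; 1, -t, 0; 0, 0, t])
      (nhdsWithin 0 (Set.Ioi 0)) (nhds 0) := by
  constructor
  · intro t ht
    rw [key]
    rw [div_eq_div_iff (by positivity) (by positivity)]
    ring
  · have hc : Continuous fun t : ℝ => 4 * t ^ 2 / (3 * t ^ 2 + 2) := by
      apply Continuous.div (by continuity) (by continuity)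
      intro t; positivity
    have h0 : Filter.Tendsto (fun t : ℝ => 4 * t ^ 2 / (3 * t ^ 2 + 2))
        (nhdsWithin 0 (Set.Ioi 0)) (nhds 0) := by
      have := (hc.tendsto 0).mono_left (nhdsWithin_le_nhds (s := Set.Ioi 0))
      norm_num at this
      exact this
    refine h0.congr fun t => ?_
    rw [key]
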